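/- Under the errors-in-variables setup a = a₀ + ã, b = X₀ᵀa₀ + b̃ with centered errors of covariance σ²I_{n+d}, the expected derivative of the estimating function s at X₀ applied to H ∈ ℝ^{n×d} equals a₀a₀ᵀH, i.e., E[s'_X(a,b;X₀)·H] = a₀a₀ᵀH for all H. -/

import Mathlib

open Matrix MeasureTheory

attribute [local instance] Matrix.frobeniusNormedAddCommGroup Matrix.frobeniusNormedSpace

/-- Entrywise expectation of a random matrix. -/
noncomputable def matExp {Ω : Type*} [MeasurableSpace Ω] (μ : Measure Ω) {p q : ℕ}
    (M : Ω → Matrix (Fin p) (Fin q) ℝ) : Matrix (Fin p) (Fin q) ℝ :=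
  Matrix.of fun i j => ∫ ω, M ω i j ∂μ

/-- The TLS estimating function
`s(a,b;X) = a(aᵀX − bᵀ) − X(I_d + XᵀX)⁻¹(Xᵀa − b)(aᵀX − bᵀ)`. -/
noncomputable def tlsScore {n d : ℕ} (a : Fin n → ℝ) (b : Fin d → ℝ)
    (X : Matrix (Fin n) (Fin d) ℝ) : Matrix (Fin n) (Fin d) ℝ :=
  vecMulVec a (Xᵀ.mulVec a - b) -
    X * (1 + Xᵀ * X)⁻¹ * vecMulVec (Xᵀ.mulVec a - b) (Xᵀ.mulVec a - b)

attribute [local instance] Matrix.frobeniusNormedRing Matrix.frobeniusNormedAlgebra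

namespace TLSAux


theorem isBBM_matmul {p q r : ℕ} :
    IsBoundedBilinearMap ℝ (fun A : Matrix (Fin p) (Fin q) ℝ × Matrix (Fin q) (Fin r) ℝ => A.1 * A.2) where
  add_left := fun x y z => Matrix.add_mul x y z
  smul_left := fun c x y => Matrix.smul_mul c x y
  add_right := fun x y z => Matrix.mul_add x y z
  smul_right := fun c x y => Matrix.mul_smul x c y
  bound := ⟨1, one_pos, fun x y => by simpa using Matrix.frobenius_norm_mul x y⟩

theorem hasFDerivAt_matmul {E : Type*} [NormedAddCommGroup E] [NormedSpace ℝ E]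
    {p q r : ℕ} {f : E → Matrix (Fin p) (Fin q) ℝ} {g : E → Matrix (Fin q) (Fin r) ℝ}
    {f' : E →L[ℝ] Matrix (Fin p) (Fin q) ℝ} {g' : E →L[ℝ] Matrix (Fin q) (Fin r) ℝ} {x : E}
    (hf : HasFDerivAt f f' x) (hg : HasFDerivAt g g' x) :
    HasFDerivAt (fun y => f y * g y)
      ((isBBM_matmul.deriv (f x, g x)).comp (f'.prod g')) x :=
  by have := (isBBM_matmul.hasFDerivAt (f x, g x)).comp x (hf.prodMk hg); exact this

theorem vecMulVec_add_left {p q : ℕ} (u v : Fin p → ℝ) (w : Fin q → ℝ) :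
    vecMulVec (u + v) w = vecMulVec u w + vecMulVec v w := by
  ext i j; simp [vecMulVec_apply, add_mul]

theorem vecMulVec_add_right {p q : ℕ} (u : Fin p → ℝ) (v w : Fin q → ℝ) :
    vecMulVec u (v + w) = vecMulVec u v + vecMulVec u w := by
  ext i j; simp [vecMulVec_apply, mul_add]

theorem vecMulVec_sub_left {p q : ℕ} (u v : Fin p → ℝ) (w : Fin q → ℝ) :
    vecMulVec (u - v) w = vecMulVec u w - vecMulVec v w := by
  ext i j; simp [vecMulVec_apply, sub_mul]

theorem vecMulVec_sub_right {p q : ℕ} (u : Fin p → ℝ) (v w : Fin q → ℝ) :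
    vecMulVec u (v - w) = vecMulVec u v - vecMulVec u w := by
  ext i j; simp [vecMulVec_apply, mul_sub]

theorem vecMulVec_smul_left {p q : ℕ} (c : ℝ) (u : Fin p → ℝ) (w : Fin q → ℝ) :
    vecMulVec (c • u) w = c • vecMulVec u w := by
  ext i j; simp [vecMulVec_apply, mul_assoc]

theorem vecMulVec_smul_right {p q : ℕ} (c : ℝ) (u : Fin p → ℝ) (w : Fin q → ℝ) :
    vecMulVec u (c • w) = c • vecMulVec u w := by
  ext i j; simp [vecMulVec_apply]; ring

/-- turn an explicit linear formula into a CLM -/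
noncomputable def mkCLM {E F : Type*} [NormedAddCommGroup E] [NormedSpace ℝ E]
    [NormedAddCommGroup F] [NormedSpace ℝ F] [FiniteDimensional ℝ E] (f : E → F)
    (hadd : ∀ x y, f (x + y) = f x + f y) (hsmul : ∀ (c : ℝ) (x), f (c • x) = c • f x) :
    E →L[ℝ] F :=
  LinearMap.toContinuousLinearMap ⟨⟨f, fun x y => hadd x y⟩, fun c x => hsmul c x⟩

@[simp] theorem mkCLM_apply {E F : Type*} [NormedAddCommGroup E] [NormedSpace ℝ E]
    [NormedAddCommGroup F] [NormedSpace ℝ F] [FiniteDimensional ℝ E] (f : E → F)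
    (h1) (h2) (x : E) : mkCLM f h1 h2 x = f x := rfl

variable {n d : ℕ}

noncomputable def c1CLM (a : Fin n → ℝ) :
    Matrix (Fin n) (Fin d) ℝ →L[ℝ] Matrix (Fin n) (Fin d) ℝ :=
  mkCLM (fun K => vecMulVec a (Kᵀ.mulVec a))
    (fun x y => by beta_reduce; rw [Matrix.transpose_add, Matrix.add_mulVec, vecMulVec_add_right])
    (fun c x => by beta_reduce; rw [Matrix.transpose_smul, Matrix.smul_mulVec, vecMulVec_smul_right])

@[simp] theorem c1CLM_apply (a : Fin n → ℝ) (K : Matrix (Fin n) (Fin d) ℝ) :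
    c1CLM a K = vecMulVec a (Kᵀ.mulVec a) := rfl

noncomputable def c2CLM (X0 : Matrix (Fin n) (Fin d) ℝ) :
    Matrix (Fin n) (Fin d) ℝ →L[ℝ] Matrix (Fin d) (Fin d) ℝ :=
  mkCLM (fun K => Kᵀ * X0 + X0ᵀ * K)
    (fun x y => by beta_reduce; rw [Matrix.transpose_add, Matrix.add_mul, Matrix.mul_add]; abel)
    (fun c x => by beta_reduce; rw [Matrix.transpose_smul, Matrix.smul_mul, Matrix.mul_smul, smul_add])

@[simp] theorem c2CLM_apply (X0 K : Matrix (Fin n) (Fin d) ℝ) :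
    c2CLM X0 K = Kᵀ * X0 + X0ᵀ * K := rfl

noncomputable def ccolCLM (a : Fin n → ℝ) :
    Matrix (Fin n) (Fin d) ℝ →L[ℝ] Matrix (Fin d) (Fin 1) ℝ :=
  mkCLM (fun K => replicateCol (Fin 1) (Kᵀ.mulVec a))
    (fun x y => by beta_reduce; ext i j; rw [Matrix.transpose_add, Matrix.add_mulVec]; simp)
    (fun c x => by beta_reduce; ext i j; rw [Matrix.transpose_smul, Matrix.smul_mulVec]; simp)

@[simp] theorem ccolCLM_apply (a : Fin n → ℝ) (K : Matrix (Fin n) (Fin d) ℝ) :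
    ccolCLM a K = replicateCol (Fin 1) (Kᵀ.mulVec a) := rfl

noncomputable def crowCLM (a : Fin n → ℝ) :
    Matrix (Fin n) (Fin d) ℝ →L[ℝ] Matrix (Fin 1) (Fin d) ℝ :=
  mkCLM (fun K => replicateRow (Fin 1) (Kᵀ.mulVec a))
    (fun x y => by beta_reduce; ext i j; rw [Matrix.transpose_add, Matrix.add_mulVec]; simp)
    (fun c x => by beta_reduce; ext i j; rw [Matrix.transpose_smul, Matrix.smul_mulVec]; simp)

@[simp] theorem crowCLM_apply (a : Fin n → ℝ) (K : Matrix (Fin n) (Fin d) ℝ) :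
    crowCLM a K = replicateRow (Fin 1) (Kᵀ.mulVec a) := rfl

noncomputable def trCLM (n d : ℕ) :
    Matrix (Fin n) (Fin d) ℝ →L[ℝ] Matrix (Fin d) (Fin n) ℝ :=
  mkCLM (fun K => Kᵀ) (fun x y => Matrix.transpose_add x y) (fun c x => Matrix.transpose_smul c x)

@[simp] theorem trCLM_apply (K : Matrix (Fin n) (Fin d) ℝ) : trCLM n d K = Kᵀ := rfl

theorem fderiv_tlsScore (a : Fin n → ℝ) (b : Fin d → ℝ)
    (X0 : Matrix (Fin n) (Fin d) ℝ) (h : IsUnit (1 + X0ᵀ * X0).det)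
    (H : Matrix (Fin n) (Fin d) ℝ) :
    fderiv ℝ (fun Y => tlsScore a b Y) X0 H =
      vecMulVec a (Hᵀ.mulVec a)
        - H * ((1 + X0ᵀ * X0)⁻¹ * vecMulVec (X0ᵀ.mulVec a - b) (X0ᵀ.mulVec a - b))
        + X0 * ((1 + X0ᵀ * X0)⁻¹ * ((Hᵀ * X0 + X0ᵀ * H) * ((1 + X0ᵀ * X0)⁻¹ *
            vecMulVec (X0ᵀ.mulVec a - b) (X0ᵀ.mulVec a - b))))
        - X0 * ((1 + X0ᵀ * X0)⁻¹
            * (vecMulVec (Hᵀ.mulVec a) (X0ᵀ.mulVec a - b)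
                + vecMulVec (X0ᵀ.mulVec a - b) (Hᵀ.mulVec a))) := by
  classical
  have hM0unit : IsUnit (1 + X0ᵀ * X0) := (Matrix.isUnit_iff_isUnit_det _).mpr h
  have h1 : HasFDerivAt (fun Y : Matrix (Fin n) (Fin d) ℝ => vecMulVec a (Yᵀ.mulVec a - b))
      (c1CLM a) X0 := by
    have heq : (fun Y : Matrix (Fin n) (Fin d) ℝ => vecMulVec a (Yᵀ.mulVec a - b))
        = fun Y => c1CLM a Y - vecMulVec a b := by
      funext Y; rw [c1CLM_apply, vecMulVec_sub_right]
    rw [heq]; exact (c1CLM a).hasFDerivAt.sub_const _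
  have htr : HasFDerivAt (fun Y : Matrix (Fin n) (Fin d) ℝ => Yᵀ) (trCLM n d) X0 :=
    ContinuousLinearMap.hasFDerivAt (trCLM n d)
  have h2a : HasFDerivAt (fun Y : Matrix (Fin n) (Fin d) ℝ => 1 + Yᵀ * Y) (c2CLM X0) X0 := by
    have h0 := (hasFDerivAt_matmul htr (hasFDerivAt_id X0)).const_add
      (1 : Matrix (Fin d) (Fin d) ℝ)
    refine h0.congr_fderiv ?_
    ext K : 1
    exact add_comm _ _
  have hinv := hasFDerivAt_ringInverse (𝕜 := ℝ) hM0unit.unit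
  rw [hM0unit.unit_spec] at hinv
  have h2 : HasFDerivAt
      (fun Y : Matrix (Fin n) (Fin d) ℝ => Ring.inverse (1 + Yᵀ * Y))
      ((-ContinuousLinearMap.mulLeftRight ℝ _ ↑hM0unit.unit⁻¹ ↑hM0unit.unit⁻¹).comp (c2CLM X0))
      X0 := by have := hinv.comp X0 h2a; exact this
  have h3 := hasFDerivAt_matmul (f := fun y => y) (hasFDerivAt_id X0) h2
  have hcol : HasFDerivAt (fun Y : Matrix (Fin n) (Fin d) ℝ => replicateCol (Fin 1) (Yᵀ.mulVec a - b))
      (ccolCLM a) X0 := by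
    have heq : (fun Y : Matrix (Fin n) (Fin d) ℝ => replicateCol (Fin 1) (Yᵀ.mulVec a - b))
        = fun Y => ccolCLM a Y - replicateCol (Fin 1) b := by
      funext Y; ext i j; simp
    rw [heq]; exact (ccolCLM a).hasFDerivAt.sub_const _
  have hrow : HasFDerivAt (fun Y : Matrix (Fin n) (Fin d) ℝ => replicateRow (Fin 1) (Yᵀ.mulVec a - b))
      (crowCLM a) X0 := by
    have heq : (fun Y : Matrix (Fin n) (Fin d) ℝ => replicateRow (Fin 1) (Yᵀ.mulVec a - b))
        = fun Y => crowCLM a Y - replicateRow (Fin 1) b := by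
      funext Y; ext i j; simp
    rw [heq]; exact (crowCLM a).hasFDerivAt.sub_const _
  have h5 := hasFDerivAt_matmul hcol hrow
  have h5' : HasFDerivAt
      (fun Y : Matrix (Fin n) (Fin d) ℝ => vecMulVec (Yᵀ.mulVec a - b) (Yᵀ.mulVec a - b))
      ((isBBM_matmul.deriv (replicateCol (Fin 1) (X0ᵀ.mulVec a - b), replicateRow (Fin 1) (X0ᵀ.mulVec a - b))).comp
        ((ccolCLM a).prod (crowCLM a))) X0 := by
    have heq : (fun Y : Matrix (Fin n) (Fin d) ℝ => vecMulVec (Yᵀ.mulVec a - b) (Yᵀ.mulVec a - b))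
        = fun Y => replicateCol (Fin 1) (Yᵀ.mulVec a - b) * replicateRow (Fin 1) (Yᵀ.mulVec a - b) := by
      funext Y; exact vecMulVec_eq (Fin 1) _ _
    rw [heq]; exact h5
  have h6 := hasFDerivAt_matmul h3 h5'
  have h7 := h1.sub h6
  have hF : (fun Y : Matrix (Fin n) (Fin d) ℝ => tlsScore a b Y)
      = fun Y => vecMulVec a (Yᵀ.mulVec a - b) -
          (Y * Ring.inverse (1 + Yᵀ * Y)) *
            vecMulVec (Yᵀ.mulVec a - b) (Yᵀ.mulVec a - b) := by
    funext Y
    simp [tlsScore, Matrix.nonsing_inv_eq_ringInverse, Matrix.mul_assoc]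
  have hsub : ∀ (A B : Matrix (Fin n) (Fin d) ℝ →L[ℝ] Matrix (Fin n) (Fin d) ℝ)
      (x : Matrix (Fin n) (Fin d) ℝ), (A - B) x = A x - B x := fun _ _ _ => rfl
  rw [hF]; erw [h7.fderiv, hsub]
  change vecMulVec a (Hᵀ.mulVec a) - (X0 * Ring.inverse (1 + X0ᵀ * X0) *
          (replicateCol (Fin 1) (X0ᵀ.mulVec a - b) * replicateRow (Fin 1) (Hᵀ.mulVec a)
            + replicateCol (Fin 1) (Hᵀ.mulVec a) * replicateRow (Fin 1) (X0ᵀ.mulVec a - b))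
          + (X0 * -(((hM0unit.unit⁻¹ : _) : Matrix (Fin d) (Fin d) ℝ) * (Hᵀ * X0 + X0ᵀ * H)
              * ((hM0unit.unit⁻¹ : _) : Matrix (Fin d) (Fin d) ℝ))
              + H * Ring.inverse (1 + X0ᵀ * X0)) *
            vecMulVec (X0ᵀ.mulVec a - b) (X0ᵀ.mulVec a - b)) = _
  have hu1 : ((hM0unit.unit⁻¹ : _) : Matrix (Fin d) (Fin d) ℝ) = (1 + X0ᵀ * X0)⁻¹ := by
    rw [Matrix.coe_units_inv, hM0unit.unit_spec]
  erw [hu1, ← Matrix.nonsing_inv_eq_ringInverse, ← vecMulVec_eq (Fin 1),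
    ← vecMulVec_eq (Fin 1)]
  simp only [Matrix.add_mul, Matrix.mul_add, Matrix.sub_mul, Matrix.mul_sub,
    Matrix.neg_mul, Matrix.mul_neg, Matrix.mul_assoc]
  abel



theorem vmv_mulVec_right {p q s : ℕ} (x : Fin p → ℝ) (y : Fin q → ℝ)
    (B : Matrix (Fin q) (Fin s) ℝ) :
    vecMulVec x (Bᵀ.mulVec y) = vecMulVec x y * B := by
  ext i j
  simp only [vecMulVec_apply, Matrix.mul_apply, Matrix.mulVec, dotProduct,
    Matrix.transpose_apply, Finset.mul_sum]
  exact Finset.sum_congr rfl fun k _ => by ring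

theorem vmv_mulVec_left {p q s : ℕ} (x : Fin q → ℝ) (y : Fin p → ℝ)
    (B : Matrix (Fin p) (Fin s) ℝ) :
    vecMulVec (Bᵀ.mulVec y) x = Bᵀ * vecMulVec y x := by
  ext i j
  simp only [vecMulVec_apply, Matrix.mul_apply, Matrix.mulVec, dotProduct,
    Matrix.transpose_apply, Finset.sum_mul]
  exact Finset.sum_congr rfl fun k _ => by ring

theorem vmv_transpose {p q : ℕ} (x : Fin p → ℝ) (y : Fin q → ℝ) :
    vecMulVec x y = (vecMulVec y x)ᵀ := by
  ext i j; simp [vecMulVec_apply, mul_comm]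

section Meas

variable {Ω : Type*} [MeasurableSpace Ω] {μ : Measure Ω}

/-- entrywise integrability of a random matrix -/
def MInt {p q : ℕ} (μ : Measure Ω) (M : Ω → Matrix (Fin p) (Fin q) ℝ) : Prop :=
  ∀ i j, Integrable (fun ω => M ω i j) μ

theorem MInt.add {p q : ℕ} {M N : Ω → Matrix (Fin p) (Fin q) ℝ}
    (hM : MInt μ M) (hN : MInt μ N) : MInt μ (fun ω => M ω + N ω) :=
  fun i j => ((hM i j).add (hN i j)).congr (by filter_upwards with ω; simp)

theorem MInt.sub {p q : ℕ} {M N : Ω → Matrix (Fin p) (Fin q) ℝ}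
    (hM : MInt μ M) (hN : MInt μ N) : MInt μ (fun ω => M ω - N ω) :=
  fun i j => ((hM i j).sub (hN i j)).congr (by filter_upwards with ω; simp)

theorem MInt.transpose {p q : ℕ} {M : Ω → Matrix (Fin p) (Fin q) ℝ}
    (hM : MInt μ M) : MInt μ (fun ω => (M ω)ᵀ) := fun i j => hM j i

theorem MInt.constMul {p q s : ℕ} {M : Ω → Matrix (Fin q) (Fin s) ℝ}
    (hM : MInt μ M) (C : Matrix (Fin p) (Fin q) ℝ) : MInt μ (fun ω => C * M ω) := by
  intro i j
  have : (fun ω => (C * M ω) i j) = fun ω => ∑ k, C i k * M ω k j := by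
    funext ω; simp [Matrix.mul_apply]
  rw [this]
  exact integrable_finset_sum _ fun k _ => (hM k j).const_mul _

theorem MInt.mulConst {p q s : ℕ} {M : Ω → Matrix (Fin p) (Fin q) ℝ}
    (hM : MInt μ M) (C : Matrix (Fin q) (Fin s) ℝ) : MInt μ (fun ω => M ω * C) := by
  intro i j
  have : (fun ω => (M ω * C) i j) = fun ω => ∑ k, M ω i k * C k j := by
    funext ω; simp [Matrix.mul_apply]
  rw [this]
  exact integrable_finset_sum _ fun k _ => (hM i k).mul_const _

theorem MInt.congr {p q : ℕ} {M N : Ω → Matrix (Fin p) (Fin q) ℝ}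
    (hM : MInt μ M) (e : ∀ ω, N ω = M ω) : MInt μ N := by
  intro i j
  have : (fun ω => N ω i j) = fun ω => M ω i j := funext fun ω => by rw [e ω]
  rw [this]; exact hM i j

theorem matExp_add {p q : ℕ} {M N : Ω → Matrix (Fin p) (Fin q) ℝ}
    (hM : MInt μ M) (hN : MInt μ N) :
    matExp μ (fun ω => M ω + N ω) = matExp μ M + matExp μ N := by
  ext i j
  simp only [matExp, Matrix.of_apply, Matrix.add_apply]
  exact integral_add (hM i j) (hN i j)

theorem matExp_sub {p q : ℕ} {M N : Ω → Matrix (Fin p) (Fin q) ℝ}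
    (hM : MInt μ M) (hN : MInt μ N) :
    matExp μ (fun ω => M ω - N ω) = matExp μ M - matExp μ N := by
  ext i j
  simp only [matExp, Matrix.of_apply, Matrix.sub_apply]
  exact integral_sub (hM i j) (hN i j)

theorem matExp_const [IsProbabilityMeasure μ] {p q : ℕ} (C : Matrix (Fin p) (Fin q) ℝ) :
    matExp μ (fun _ => C) = C := by
  ext i j; simp [matExp]

theorem matExp_transpose {p q : ℕ} (M : Ω → Matrix (Fin p) (Fin q) ℝ) :
    matExp μ (fun ω => (M ω)ᵀ) = (matExp μ M)ᵀ := rfl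

theorem matExp_constMul {p q s : ℕ} (C : Matrix (Fin p) (Fin q) ℝ)
    (M : Ω → Matrix (Fin q) (Fin s) ℝ) (hM : MInt μ M) :
    matExp μ (fun ω => C * M ω) = C * matExp μ M := by
  ext i j
  simp only [matExp, Matrix.of_apply, Matrix.mul_apply]
  rw [integral_finset_sum _ fun k _ => (hM k j).const_mul (C i k)]
  simp [integral_const_mul]

theorem matExp_mulConst {p q s : ℕ} (C : Matrix (Fin q) (Fin s) ℝ)
    (M : Ω → Matrix (Fin p) (Fin q) ℝ) (hM : MInt μ M) :
    matExp μ (fun ω => M ω * C) = matExp μ M * C := by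
  ext i j
  simp only [matExp, Matrix.of_apply, Matrix.mul_apply]
  rw [integral_finset_sum _ fun k _ => (hM i k).mul_const (C k j)]
  simp [integral_mul_const]

theorem matExp_vmv_left {p q : ℕ} (u : Fin p → ℝ) (v : Ω → Fin q → ℝ)
    (hmean : ∀ j, ∫ ω, v ω j ∂μ = 0) :
    matExp μ (fun ω => vecMulVec u (v ω)) = 0 := by
  ext i j
  simp [matExp, vecMulVec_apply, integral_const_mul, hmean j]

theorem matExp_vmv_right {p q : ℕ} (u : Ω → Fin p → ℝ) (v : Fin q → ℝ)
    (hmean : ∀ i, ∫ ω, u ω i ∂μ = 0) :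
    matExp μ (fun ω => vecMulVec (u ω) v) = 0 := by
  ext i j
  simp [matExp, vecMulVec_apply, integral_mul_const, hmean i]

end Meas



theorem matExp_main {Ω : Type*} [MeasurableSpace Ω] (μ : Measure Ω)
    [IsProbabilityMeasure μ] {n d : ℕ} (σ2 : ℝ)
    (a0 : Fin n → ℝ) (X0 : Matrix (Fin n) (Fin d) ℝ)
    (ta : Ω → Fin n → ℝ) (tb : Ω → Fin d → ℝ)
    (hta_int : ∀ i, Integrable (fun ω => ta ω i) μ)
    (htb_int : ∀ i, Integrable (fun ω => tb ω i) μ)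
    (haa_int : ∀ i j, Integrable (fun ω => ta ω i * ta ω j) μ)
    (hab_int : ∀ i j, Integrable (fun ω => ta ω i * tb ω j) μ)
    (hbb_int : ∀ i j, Integrable (fun ω => tb ω i * tb ω j) μ)
    (hta_mean : ∀ i, ∫ ω, ta ω i ∂μ = 0)
    (htb_mean : ∀ i, ∫ ω, tb ω i ∂μ = 0)
    (haa : matExp μ (fun ω => vecMulVec (ta ω) (ta ω)) = σ2 • 1)
    (hab : matExp μ (fun ω => vecMulVec (ta ω) (tb ω)) = 0)
    (hbb : matExp μ (fun ω => vecMulVec (tb ω) (tb ω)) = σ2 • 1)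
    (hdet : IsUnit (1 + X0ᵀ * X0).det) (H : Matrix (Fin n) (Fin d) ℝ) :
    matExp μ (fun ω =>
      vecMulVec (a0 + ta ω) (Hᵀ.mulVec (a0 + ta ω))
        - H * ((1 + X0ᵀ * X0)⁻¹ *
            vecMulVec (X0ᵀ.mulVec (ta ω) - tb ω) (X0ᵀ.mulVec (ta ω) - tb ω))
        + X0 * ((1 + X0ᵀ * X0)⁻¹ * ((Hᵀ * X0 + X0ᵀ * H) * ((1 + X0ᵀ * X0)⁻¹ *
            vecMulVec (X0ᵀ.mulVec (ta ω) - tb ω) (X0ᵀ.mulVec (ta ω) - tb ω))))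
        - X0 * ((1 + X0ᵀ * X0)⁻¹
            * (vecMulVec (Hᵀ.mulVec (a0 + ta ω)) (X0ᵀ.mulVec (ta ω) - tb ω)
                + vecMulVec (X0ᵀ.mulVec (ta ω) - tb ω) (Hᵀ.mulVec (a0 + ta ω)))))
      = vecMulVec a0 a0 * H := by
  classical
  have mint_uu : MInt μ (fun ω => vecMulVec (ta ω) (ta ω)) := fun i j => by
    simpa only [vecMulVec_apply] using haa_int i j
  have mint_uw : MInt μ (fun ω => vecMulVec (ta ω) (tb ω)) := fun i j => by
    simpa only [vecMulVec_apply] using hab_int i j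
  have mint_ww : MInt μ (fun ω => vecMulVec (tb ω) (tb ω)) := fun i j => by
    simpa only [vecMulVec_apply] using hbb_int i j
  have mint_a0u : MInt μ (fun ω => vecMulVec a0 (ta ω)) := fun i j => by
    simpa only [vecMulVec_apply] using (hta_int j).const_mul (a0 i)
  have mint_ua0 : MInt μ (fun ω => vecMulVec (ta ω) a0) := fun i j => by
    simpa only [vecMulVec_apply] using (hta_int i).mul_const (a0 j)
  have mint_a0w : MInt μ (fun ω => vecMulVec a0 (tb ω)) := fun i j => by
    simpa only [vecMulVec_apply] using (htb_int j).const_mul (a0 i)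
  have mint_c : MInt μ (fun _ => vecMulVec a0 a0) := fun i j => integrable_const _
  -- decompositions
  have decomp_aa : ∀ ω, vecMulVec (a0 + ta ω) (a0 + ta ω)
      = vecMulVec a0 a0 + vecMulVec a0 (ta ω)
        + (vecMulVec (ta ω) a0 + vecMulVec (ta ω) (ta ω)) := fun ω => by
    rw [vecMulVec_add_left, vecMulVec_add_right, vecMulVec_add_right]
  have decomp_rr : ∀ ω, vecMulVec (X0ᵀ.mulVec (ta ω) - tb ω) (X0ᵀ.mulVec (ta ω) - tb ω)
      = X0ᵀ * (vecMulVec (ta ω) (ta ω) * X0) - X0ᵀ * vecMulVec (ta ω) (tb ω)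
        - (vecMulVec (ta ω) (tb ω))ᵀ * X0 + vecMulVec (tb ω) (tb ω) := fun ω => by
    rw [vecMulVec_sub_left, vecMulVec_sub_right, vecMulVec_sub_right,
      vmv_mulVec_left (X0ᵀ.mulVec (ta ω)) (ta ω) X0,
      vmv_mulVec_right (ta ω) (ta ω) X0,
      vmv_mulVec_left (tb ω) (ta ω) X0,
      vmv_mulVec_right (tb ω) (ta ω) X0,
      vmv_transpose (tb ω) (ta ω)]
    abel
  have decomp_ar : ∀ ω, vecMulVec (a0 + ta ω) (X0ᵀ.mulVec (ta ω) - tb ω)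
      = vecMulVec a0 (ta ω) * X0 - vecMulVec a0 (tb ω)
        + (vecMulVec (ta ω) (ta ω) * X0 - vecMulVec (ta ω) (tb ω)) := fun ω => by
    rw [vecMulVec_add_left, vecMulVec_sub_right, vecMulVec_sub_right,
      vmv_mulVec_right a0 (ta ω) X0, vmv_mulVec_right (ta ω) (ta ω) X0]
  have einner : ∀ ω, vecMulVec (Hᵀ.mulVec (a0 + ta ω)) (X0ᵀ.mulVec (ta ω) - tb ω)
        + vecMulVec (X0ᵀ.mulVec (ta ω) - tb ω) (Hᵀ.mulVec (a0 + ta ω))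
      = Hᵀ * vecMulVec (a0 + ta ω) (X0ᵀ.mulVec (ta ω) - tb ω)
        + (vecMulVec (a0 + ta ω) (X0ᵀ.mulVec (ta ω) - tb ω))ᵀ * H := fun ω => by
    rw [vmv_mulVec_left (X0ᵀ.mulVec (ta ω) - tb ω) (a0 + ta ω) H,
      vmv_mulVec_right (X0ᵀ.mulVec (ta ω) - tb ω) (a0 + ta ω) H,
      vmv_transpose (X0ᵀ.mulVec (ta ω) - tb ω) (a0 + ta ω)]
  -- compound integrability
  have mint_AA : MInt μ (fun ω => vecMulVec (a0 + ta ω) (a0 + ta ω)) :=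
    ((mint_c.add mint_a0u).add (mint_ua0.add mint_uu)).congr decomp_aa
  have mint_RR : MInt μ (fun ω =>
      vecMulVec (X0ᵀ.mulVec (ta ω) - tb ω) (X0ᵀ.mulVec (ta ω) - tb ω)) :=
    (((((mint_uu.mulConst X0).constMul X0ᵀ).sub (mint_uw.constMul X0ᵀ)).sub
      ((mint_uw.transpose).mulConst X0)).add mint_ww).congr decomp_rr
  have mint_AR : MInt μ (fun ω =>
      vecMulVec (a0 + ta ω) (X0ᵀ.mulVec (ta ω) - tb ω)) :=
    (((mint_a0u.mulConst X0).sub mint_a0w).add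
      ((mint_uu.mulConst X0).sub mint_uw)).congr decomp_ar
  -- basic expectations
  have hEa0u : matExp μ (fun ω => vecMulVec a0 (ta ω)) = 0 := matExp_vmv_left a0 ta hta_mean
  have hEua0 : matExp μ (fun ω => vecMulVec (ta ω) a0) = 0 := matExp_vmv_right ta a0 hta_mean
  have hEa0w : matExp μ (fun ω => vecMulVec a0 (tb ω)) = 0 := matExp_vmv_left a0 tb htb_mean
  -- main expectations
  have hAA : matExp μ (fun ω => vecMulVec (a0 + ta ω) (a0 + ta ω))
      = vecMulVec a0 a0 + σ2 • 1 := by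
    rw [show (fun ω => vecMulVec (a0 + ta ω) (a0 + ta ω))
        = fun ω => vecMulVec a0 a0 + vecMulVec a0 (ta ω)
          + (vecMulVec (ta ω) a0 + vecMulVec (ta ω) (ta ω)) from funext decomp_aa]
    rw [matExp_add (mint_c.add mint_a0u) (mint_ua0.add mint_uu),
      matExp_add mint_c mint_a0u, matExp_add mint_ua0 mint_uu,
      matExp_const, hEa0u, hEua0, haa]
    simp
  have hRR : matExp μ (fun ω =>
      vecMulVec (X0ᵀ.mulVec (ta ω) - tb ω) (X0ᵀ.mulVec (ta ω) - tb ω))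
      = σ2 • (1 + X0ᵀ * X0) := by
    rw [show (fun ω => vecMulVec (X0ᵀ.mulVec (ta ω) - tb ω) (X0ᵀ.mulVec (ta ω) - tb ω))
        = fun ω => X0ᵀ * (vecMulVec (ta ω) (ta ω) * X0) - X0ᵀ * vecMulVec (ta ω) (tb ω)
          - (vecMulVec (ta ω) (tb ω))ᵀ * X0 + vecMulVec (tb ω) (tb ω) from funext decomp_rr]
    rw [matExp_add ((((mint_uu.mulConst X0).constMul X0ᵀ).sub (mint_uw.constMul X0ᵀ)).sub
        ((mint_uw.transpose).mulConst X0)) mint_ww,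
      matExp_sub (((mint_uu.mulConst X0).constMul X0ᵀ).sub (mint_uw.constMul X0ᵀ))
        ((mint_uw.transpose).mulConst X0),
      matExp_sub ((mint_uu.mulConst X0).constMul X0ᵀ) (mint_uw.constMul X0ᵀ),
      matExp_constMul X0ᵀ _ (mint_uu.mulConst X0),
      matExp_mulConst X0 _ mint_uu,
      matExp_constMul X0ᵀ _ mint_uw,
      matExp_mulConst X0 _ mint_uw.transpose,
      matExp_transpose, haa, hab, hbb]
    simp only [Matrix.mul_zero, Matrix.zero_mul, sub_zero, Matrix.transpose_zero,
      Matrix.smul_mul, Matrix.mul_smul, Matrix.one_mul, Matrix.mul_one, smul_add]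
    abel
  have hAR : matExp μ (fun ω => vecMulVec (a0 + ta ω) (X0ᵀ.mulVec (ta ω) - tb ω))
      = σ2 • X0 := by
    rw [show (fun ω => vecMulVec (a0 + ta ω) (X0ᵀ.mulVec (ta ω) - tb ω))
        = fun ω => vecMulVec a0 (ta ω) * X0 - vecMulVec a0 (tb ω)
          + (vecMulVec (ta ω) (ta ω) * X0 - vecMulVec (ta ω) (tb ω)) from funext decomp_ar]
    rw [matExp_add ((mint_a0u.mulConst X0).sub mint_a0w)
        ((mint_uu.mulConst X0).sub mint_uw),
      matExp_sub (mint_a0u.mulConst X0) mint_a0w,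
      matExp_sub (mint_uu.mulConst X0) mint_uw,
      matExp_mulConst X0 _ mint_a0u, matExp_mulConst X0 _ mint_uu,
      hEa0u, hEa0w, haa, hab]
    simp [Matrix.smul_mul]
  -- the four top-level terms
  have hT1 : matExp μ (fun ω => vecMulVec (a0 + ta ω) (Hᵀ.mulVec (a0 + ta ω)))
      = vecMulVec a0 a0 * H + σ2 • H := by
    rw [show (fun ω => vecMulVec (a0 + ta ω) (Hᵀ.mulVec (a0 + ta ω)))
        = fun ω => vecMulVec (a0 + ta ω) (a0 + ta ω) * H
        from funext fun ω => vmv_mulVec_right _ _ H]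
    rw [matExp_mulConst H _ mint_AA, hAA, Matrix.add_mul, Matrix.smul_mul, Matrix.one_mul]
  have hT2 : matExp μ (fun ω => H * ((1 + X0ᵀ * X0)⁻¹ *
      vecMulVec (X0ᵀ.mulVec (ta ω) - tb ω) (X0ᵀ.mulVec (ta ω) - tb ω))) = σ2 • H := by
    rw [matExp_constMul H _ (mint_RR.constMul (1 + X0ᵀ * X0)⁻¹),
      matExp_constMul (1 + X0ᵀ * X0)⁻¹ _ mint_RR, hRR,
      Matrix.mul_smul, Matrix.nonsing_inv_mul _ hdet]
    simp [Matrix.mul_smul]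
  have hT3 : matExp μ (fun ω => X0 * ((1 + X0ᵀ * X0)⁻¹ * ((Hᵀ * X0 + X0ᵀ * H) *
      ((1 + X0ᵀ * X0)⁻¹ *
        vecMulVec (X0ᵀ.mulVec (ta ω) - tb ω) (X0ᵀ.mulVec (ta ω) - tb ω)))))
      = σ2 • (X0 * ((1 + X0ᵀ * X0)⁻¹ * (Hᵀ * X0 + X0ᵀ * H))) := by
    rw [matExp_constMul X0 _ (((mint_RR.constMul (1 + X0ᵀ * X0)⁻¹).constMul
        (Hᵀ * X0 + X0ᵀ * H)).constMul (1 + X0ᵀ * X0)⁻¹),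
      matExp_constMul (1 + X0ᵀ * X0)⁻¹ _ ((mint_RR.constMul (1 + X0ᵀ * X0)⁻¹).constMul
        (Hᵀ * X0 + X0ᵀ * H)),
      matExp_constMul (Hᵀ * X0 + X0ᵀ * H) _ (mint_RR.constMul (1 + X0ᵀ * X0)⁻¹),
      matExp_constMul (1 + X0ᵀ * X0)⁻¹ _ mint_RR, hRR,
      Matrix.mul_smul, Matrix.nonsing_inv_mul _ hdet]
    simp only [Matrix.mul_smul, Matrix.mul_one]
  have hT4 : matExp μ (fun ω => X0 * ((1 + X0ᵀ * X0)⁻¹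
      * (vecMulVec (Hᵀ.mulVec (a0 + ta ω)) (X0ᵀ.mulVec (ta ω) - tb ω)
          + vecMulVec (X0ᵀ.mulVec (ta ω) - tb ω) (Hᵀ.mulVec (a0 + ta ω)))))
      = σ2 • (X0 * ((1 + X0ᵀ * X0)⁻¹ * (Hᵀ * X0 + X0ᵀ * H))) := by
    rw [show (fun ω => X0 * ((1 + X0ᵀ * X0)⁻¹
        * (vecMulVec (Hᵀ.mulVec (a0 + ta ω)) (X0ᵀ.mulVec (ta ω) - tb ω)
            + vecMulVec (X0ᵀ.mulVec (ta ω) - tb ω) (Hᵀ.mulVec (a0 + ta ω)))))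
        = fun ω => X0 * ((1 + X0ᵀ * X0)⁻¹
          * (Hᵀ * vecMulVec (a0 + ta ω) (X0ᵀ.mulVec (ta ω) - tb ω)
              + (vecMulVec (a0 + ta ω) (X0ᵀ.mulVec (ta ω) - tb ω))ᵀ * H))
        from funext fun ω => by rw [einner ω]]
    rw [matExp_constMul X0 _ (((mint_AR.constMul Hᵀ).add
        (mint_AR.transpose.mulConst H)).constMul (1 + X0ᵀ * X0)⁻¹),
      matExp_constMul (1 + X0ᵀ * X0)⁻¹ _ ((mint_AR.constMul Hᵀ).add
        (mint_AR.transpose.mulConst H)),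
      matExp_add (mint_AR.constMul Hᵀ) (mint_AR.transpose.mulConst H),
      matExp_constMul Hᵀ _ mint_AR,
      matExp_mulConst H _ mint_AR.transpose,
      matExp_transpose, hAR]
    simp only [Matrix.transpose_smul, Matrix.smul_mul, Matrix.mul_smul, ← smul_add]
  -- assemble
  have hint1 : MInt μ (fun ω => vecMulVec (a0 + ta ω) (Hᵀ.mulVec (a0 + ta ω))) :=
    (mint_AA.mulConst H).congr (fun ω => vmv_mulVec_right _ _ H)
  have hint2 : MInt μ (fun ω => H * ((1 + X0ᵀ * X0)⁻¹ *
      vecMulVec (X0ᵀ.mulVec (ta ω) - tb ω) (X0ᵀ.mulVec (ta ω) - tb ω))) :=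
    (mint_RR.constMul (1 + X0ᵀ * X0)⁻¹).constMul H
  have hint3 : MInt μ (fun ω => X0 * ((1 + X0ᵀ * X0)⁻¹ * ((Hᵀ * X0 + X0ᵀ * H) *
      ((1 + X0ᵀ * X0)⁻¹ *
        vecMulVec (X0ᵀ.mulVec (ta ω) - tb ω) (X0ᵀ.mulVec (ta ω) - tb ω))))) :=
    (((mint_RR.constMul (1 + X0ᵀ * X0)⁻¹).constMul
      (Hᵀ * X0 + X0ᵀ * H)).constMul (1 + X0ᵀ * X0)⁻¹).constMul X0
  have hint4 : MInt μ (fun ω => X0 * ((1 + X0ᵀ * X0)⁻¹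
      * (vecMulVec (Hᵀ.mulVec (a0 + ta ω)) (X0ᵀ.mulVec (ta ω) - tb ω)
          + vecMulVec (X0ᵀ.mulVec (ta ω) - tb ω) (Hᵀ.mulVec (a0 + ta ω))))) :=
    ((((mint_AR.constMul Hᵀ).add (mint_AR.transpose.mulConst H)).congr einner).constMul
      (1 + X0ᵀ * X0)⁻¹).constMul X0
  rw [matExp_sub ((hint1.sub hint2).add hint3) hint4,
    matExp_add (hint1.sub hint2) hint3,
    matExp_sub hint1 hint2,
    hT1, hT2, hT3, hT4]
  abel


end TLSAux

/-- In the EIV model `a = a₀ + ã`, `b = X₀ᵀa₀ + b̃` with centered errors whose stacked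
covariance is `σ²I_{n+d}`, the expected derivative of the estimating function `s` at the
true parameter `X₀`, applied to a direction `H`, equals `a₀a₀ᵀH`. -/
theorem matExp_fderiv_tlsScore {Ω : Type*} [MeasurableSpace Ω] (μ : Measure Ω)
    [IsProbabilityMeasure μ] {n d : ℕ} (σ2 : ℝ) (hσ : 0 < σ2)
    (a0 : Fin n → ℝ) (X0 : Matrix (Fin n) (Fin d) ℝ)
    (ta : Ω → Fin n → ℝ) (tb : Ω → Fin d → ℝ)
    (hta_int : ∀ i, Integrable (fun ω => ta ω i) μ)
    (htb_int : ∀ i, Integrable (fun ω => tb ω i) μ)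
    (haa_int : ∀ i j, Integrable (fun ω => ta ω i * ta ω j) μ)
    (hab_int : ∀ i j, Integrable (fun ω => ta ω i * tb ω j) μ)
    (hbb_int : ∀ i j, Integrable (fun ω => tb ω i * tb ω j) μ)
    (hta_mean : ∀ i, ∫ ω, ta ω i ∂μ = 0)
    (htb_mean : ∀ i, ∫ ω, tb ω i ∂μ = 0)
    (haa : matExp μ (fun ω => vecMulVec (ta ω) (ta ω)) = σ2 • 1)
    (hab : matExp μ (fun ω => vecMulVec (ta ω) (tb ω)) = 0)
    (hbb : matExp μ (fun ω => vecMulVec (tb ω) (tb ω)) = σ2 • 1) :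
    ∀ H : Matrix (Fin n) (Fin d) ℝ,
      matExp μ (fun ω =>
          fderiv ℝ (fun Y => tlsScore (a0 + ta ω) (X0ᵀ.mulVec a0 + tb ω) Y) X0 H) =
        vecMulVec a0 a0 * H := by
  intro H
  classical
  have hpsd : (X0ᵀ * X0).PosSemidef := by
    have h := Matrix.posSemidef_conjTranspose_mul_self X0
    rwa [Matrix.conjTranspose_eq_transpose_of_trivial] at h
  have hpos : (1 + X0ᵀ * X0).PosDef := Matrix.PosDef.add_posSemidef Matrix.PosDef.one hpsd
  have hdet : IsUnit (1 + X0ᵀ * X0).det := isUnit_iff_ne_zero.mpr (ne_of_gt hpos.det_pos)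
  have hrsimp : ∀ ω, X0ᵀ.mulVec (a0 + ta ω) - (X0ᵀ.mulVec a0 + tb ω)
      = X0ᵀ.mulVec (ta ω) - tb ω := fun ω => by
    rw [Matrix.mulVec_add]; abel
  have key : (fun ω => fderiv ℝ (fun Y => tlsScore (a0 + ta ω) (X0ᵀ.mulVec a0 + tb ω) Y) X0 H)
      = fun ω =>
        vecMulVec (a0 + ta ω) (Hᵀ.mulVec (a0 + ta ω))
          - H * ((1 + X0ᵀ * X0)⁻¹ *
              vecMulVec (X0ᵀ.mulVec (ta ω) - tb ω) (X0ᵀ.mulVec (ta ω) - tb ω))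
          + X0 * ((1 + X0ᵀ * X0)⁻¹ * ((Hᵀ * X0 + X0ᵀ * H) * ((1 + X0ᵀ * X0)⁻¹ *
              vecMulVec (X0ᵀ.mulVec (ta ω) - tb ω) (X0ᵀ.mulVec (ta ω) - tb ω))))
          - X0 * ((1 + X0ᵀ * X0)⁻¹
              * (vecMulVec (Hᵀ.mulVec (a0 + ta ω)) (X0ᵀ.mulVec (ta ω) - tb ω)
                  + vecMulVec (X0ᵀ.mulVec (ta ω) - tb ω) (Hᵀ.mulVec (a0 + ta ω)))) := by
    funext ω
    rw [TLSAux.fderiv_tlsScore (a0 + ta ω) (X0ᵀ.mulVec a0 + tb ω) X0 hdet H, hrsimp ω]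
  rw [key]
  exact TLSAux.matExp_main μ σ2 a0 X0 ta tb hta_int htb_int haa_int hab_int hbb_int
    hta_mean htb_mean haa hab hbb hdet H
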